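/- arXiv:2408.00603 — 5 statements merged into one kernel-verified Lean document; each statement's English description precedes it below -/
import Mathlib

section
/- Let X be a δ-hyperbolic geodesic space, ε > 0, x ∈ X, and let γ, η : [0,L] → X be geodesics with d(γ(t), η(t)) ≤ ε for all t. Then the union of the nearest point projections π_γ(x) ∪ π_η(x) has diameter at most 2ε + 16δ. -/
open Metric Set

variable {X : Type*} [MetricSpace X]

/-- The Gromov product `(x,y)_z`. -/
noncomputable def gromovProduct {X : Type*} [MetricSpace X] (x y z : X) : ℝ :=
  (dist x z + dist z y - dist x y) / 2

/-- `γ` is an arclength-parametrized geodesic on the interval `[a, b]`. -/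
def IsGeodesicOn {X : Type*} [MetricSpace X] (γ : ℝ → X) (a b : ℝ) : Prop :=
  ∀ s ∈ Set.Icc a b, ∀ t ∈ Set.Icc a b, dist (γ s) (γ t) = |s - t|

/-- `γ` is a geodesic from `x` to `y`, parametrized by arclength on `[0, dist x y]`. -/
def GeodesicFromTo {X : Type*} [MetricSpace X] (γ : ℝ → X) (x y : X) : Prop :=
  γ 0 = x ∧ γ (dist x y) = y ∧ IsGeodesicOn γ 0 (dist x y)

/-- `X` is a geodesic metric space. -/
def GeodesicSpace (X : Type*) [MetricSpace X] : Prop :=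
  ∀ x y : X, ∃ γ : ℝ → X, GeodesicFromTo γ x y

/-- All geodesic triangles in `X` are `4δ`-thin: for a triangle with vertices `y, x, z`, the
initial subsegments of `[y,x]` and `[y,z]` of length `(x,z)_y` are `4δ`-synchronized. -/
def ThinTriangles (X : Type*) [MetricSpace X] (δ : ℝ) : Prop :=
  ∀ x y z : X, ∀ γ₁ γ₂ : ℝ → X, GeodesicFromTo γ₁ y x → GeodesicFromTo γ₂ y z →
    ∀ t ∈ Set.Icc 0 (gromovProduct x z y), dist (γ₁ t) (γ₂ t) ≤ 4 * δ

/-- The set of nearest-point projections of `x` onto the subset `A`. -/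
def projSet {X : Type*} [MetricSpace X] (A : Set X) (x : X) : Set X :=
  {p ∈ A | dist x p = Metric.infDist x A}

private lemma key_proj (δ : ℝ)
    (hthin : ThinTriangles X δ)
    {L s t : ℝ} (x : X) {η : ℝ → X} (hη : IsGeodesicOn η 0 L)
    (hs : s ∈ Set.Icc 0 L) (ht : t ∈ Set.Icc 0 L) (hts : t ≤ s)
    (hgeod : ∃ γ₁ : ℝ → X, GeodesicFromTo γ₁ (η t) x)
    (hq : dist x (η t) = Metric.infDist x (η '' Set.Icc 0 L)) :
    s - t ≤ (dist x (η s) - dist x (η t)) + 8 * δ := by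
  obtain ⟨γ₁, h10, h1e, h1g⟩ := hgeod
  have hda : dist (η t) x = dist x (η t) := dist_comm _ _
  have hℓ : dist (η t) (η s) = s - t := by
    rw [hη t ht s hs, abs_of_nonpos (by linarith)]; ring
  set γ₂ : ℝ → X := fun u => η (t + u) with hγ₂
  have h2 : GeodesicFromTo γ₂ (η t) (η s) := by
    refine ⟨by simp [hγ₂], ?_, ?_⟩
    · rw [hℓ]; simp [hγ₂]
    · rw [hℓ]
      intro u hu v hv
      have hu1 : t + u ∈ Set.Icc (0:ℝ) L :=
        ⟨by linarith [hu.1, ht.1], by linarith [hu.2, hs.2]⟩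
      have hv1 : t + v ∈ Set.Icc (0:ℝ) L :=
        ⟨by linarith [hv.1, ht.1], by linarith [hv.2, hs.2]⟩
      have := hη (t + u) hu1 (t + v) hv1
      rw [hγ₂]; simp only []
      rw [this]; congr 1; ring
  set u₀ : ℝ := gromovProduct x (η s) (η t) with hu₀
  have hu₀eq : u₀ = (dist x (η t) + (s - t) - dist x (η s)) / 2 := by
    rw [hu₀, gromovProduct, hℓ]
  have h0 : 0 ≤ u₀ := by
    have := dist_triangle x (η t) (η s)
    rw [hu₀eq]; linarith [hℓ ▸ this]
  have hu₀a : u₀ ≤ dist x (η t) := by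
    have h1 := dist_triangle (η t) x (η s)
    rw [dist_comm (η t) x] at h1
    rw [hu₀eq]; linarith [hℓ ▸ h1]
  have hu₀ℓ : u₀ ≤ s - t := by
    have h1 := dist_triangle x (η s) (η t)
    rw [dist_comm (η s) (η t)] at h1
    rw [hu₀eq]; linarith [hℓ ▸ h1]
  have hthin' : dist (γ₁ u₀) (γ₂ u₀) ≤ 4 * δ :=
    hthin x (η t) (η s) γ₁ γ₂ ⟨h10, h1e, h1g⟩ h2 u₀ ⟨h0, le_refl _⟩
  -- the point on η at parameter t + u₀ is at distance ≥ infDist from x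
  have hmem : η (t + u₀) ∈ η '' Set.Icc 0 L :=
    Set.mem_image_of_mem _ ⟨by linarith [ht.1], by linarith [hs.2]⟩
  have hge : dist x (η t) ≤ dist x (η (t + u₀)) := by
    rw [hq]; exact Metric.infDist_le_dist_of_mem hmem
  have hx1 : dist x (γ₁ u₀) = dist x (η t) - u₀ := by
    have h1 := h1g u₀ ⟨h0, by rw [hda]; exact hu₀a⟩ (dist (η t) x)
      ⟨dist_nonneg, le_refl _⟩
    rw [h1e] at h1
    rw [dist_comm x (γ₁ u₀), h1, hda, abs_of_nonpos (by linarith)]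
    ring
  have h2u : γ₂ u₀ = η (t + u₀) := rfl
  have htri : dist x (η (t + u₀)) ≤ dist x (γ₁ u₀) + dist (γ₁ u₀) (γ₂ u₀) := by
    rw [h2u] at *
    exact dist_triangle x (γ₁ u₀) (η (t + u₀))
  rw [hu₀eq] at *
  linarith

private lemma abs_sub_proj (δ : ℝ)
    (hgeo : GeodesicSpace X) (hthin : ThinTriangles X δ)
    {L s t : ℝ} (x : X) {η : ℝ → X} (hη : IsGeodesicOn η 0 L)
    (hs : s ∈ Set.Icc 0 L) (ht : t ∈ Set.Icc 0 L)
    (hq : dist x (η t) = Metric.infDist x (η '' Set.Icc 0 L)) :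
    |s - t| ≤ (dist x (η s) - dist x (η t)) + 8 * δ := by
  rcases le_total t s with hts | hst
  · rw [abs_of_nonneg (by linarith)]
    exact key_proj δ hthin x hη hs ht hts ⟨(hgeo (η t) x).choose, (hgeo (η t) x).choose_spec⟩ hq
  · -- reverse the geodesic
    set η' : ℝ → X := fun u => η (L - u) with hη'def
    have himg : η' '' Set.Icc 0 L = η '' Set.Icc 0 L := by
      rw [hη'def, show (fun u => η (L - u)) = η ∘ (fun u => L - u) from rfl,
        Set.image_comp, Set.image_const_sub_Icc]
      norm_num
    have hη'g : IsGeodesicOn η' 0 L := by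
      intro u hu v hv
      have h1 := hη (L - u) ⟨by linarith [hu.2], by linarith [hu.1]⟩
        (L - v) ⟨by linarith [hv.2], by linarith [hv.1]⟩
      rw [hη'def]; simp only []
      rw [h1, abs_sub_comm]; congr 1; ring
    have hs' : L - s ∈ Set.Icc (0:ℝ) L := ⟨by linarith [hs.2], by linarith [hs.1]⟩
    have ht' : L - t ∈ Set.Icc (0:ℝ) L := ⟨by linarith [ht.2], by linarith [ht.1]⟩
    have hts' : L - t ≤ L - s := by linarith
    have hq' : dist x (η' (L - t)) = Metric.infDist x (η' '' Set.Icc 0 L) := by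
      rw [himg, hη'def]; simp only []
      rw [show L - (L - t) = t by ring]; exact hq
    have := key_proj δ hthin x hη'g hs' ht' hts'
      ⟨(hgeo (η' (L - t)) x).choose, (hgeo (η' (L - t)) x).choose_spec⟩ hq'
    rw [hη'def] at this
    simp only [show L - (L - t) = t by ring, show L - (L - s) = s by ring] at this
    rw [abs_of_nonpos (by linarith)]
    linarith

private lemma cross_bound (δ : ℝ) (hδ : 0 ≤ δ)
    (hgeo : GeodesicSpace X) (hthin : ThinTriangles X δ)
    (ε L : ℝ) (x : X) (γ η : ℝ → X)
    (hγ : IsGeodesicOn γ 0 L) (hη : IsGeodesicOn η 0 L)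
    (hsync : ∀ t ∈ Set.Icc 0 L, dist (γ t) (η t) ≤ ε)
    {s t : ℝ} (hs : s ∈ Set.Icc 0 L) (ht : t ∈ Set.Icc 0 L)
    (hu : dist x (γ s) = Metric.infDist x (γ '' Set.Icc 0 L))
    (hv : dist x (η t) = Metric.infDist x (η '' Set.Icc 0 L)) :
    dist (γ s) (η t) ≤ 2 * ε + 16 * δ := by
  have h1 : |s - t| ≤ (dist x (η s) - dist x (η t)) + 8 * δ :=
    abs_sub_proj δ hgeo hthin x hη hs ht hv
  have h2 : |t - s| ≤ (dist x (γ t) - dist x (γ s)) + 8 * δ :=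
    abs_sub_proj δ hgeo hthin x hγ ht hs hu
  have h3 : dist x (η s) ≤ dist x (γ s) + ε := by
    calc dist x (η s) ≤ dist x (γ s) + dist (γ s) (η s) := dist_triangle _ _ _
      _ ≤ dist x (γ s) + ε := by linarith [hsync s hs]
  have h4 : dist x (γ t) ≤ dist x (η t) + ε := by
    have := hsync t ht
    calc dist x (γ t) ≤ dist x (η t) + dist (η t) (γ t) := dist_triangle _ _ _
      _ ≤ dist x (η t) + ε := by rw [dist_comm (η t) (γ t)]; linarith
  have habs : |t - s| = |s - t| := abs_sub_comm t s
  have h5 : |s - t| ≤ ε + 8 * δ := by rw [habs] at h2; linarith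
  calc dist (γ s) (η t) ≤ dist (γ s) (γ t) + dist (γ t) (η t) := dist_triangle _ _ _
    _ ≤ |s - t| + ε := by rw [hγ s hs t ht]; linarith [hsync t ht]
    _ ≤ 2 * ε + 16 * δ := by linarith

/-- If `γ, η : [0,L] → X` are `ε`-synchronized geodesics in a `δ`-hyperbolic geodesic space,
then `π_γ(x) ∪ π_η(x)` has diameter at most `2ε + 16δ`. -/
theorem diam_projSet_synchronized (δ : ℝ) (hδ : 0 ≤ δ)
    (hgeo : GeodesicSpace X) (hthin : ThinTriangles X δ)
    (ε L : ℝ) (hε : 0 < ε) (hL : 0 ≤ L) (x : X) (γ η : ℝ → X)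
    (hγ : IsGeodesicOn γ 0 L) (hη : IsGeodesicOn η 0 L)
    (hsync : ∀ t ∈ Set.Icc 0 L, dist (γ t) (η t) ≤ ε) :
    Metric.diam (projSet (γ '' Set.Icc 0 L) x ∪ projSet (η '' Set.Icc 0 L) x)
      ≤ 2 * ε + 16 * δ := by
  have hsync' : ∀ t ∈ Set.Icc (0:ℝ) L, dist (η t) (γ t) ≤ ε := by
    intro t ht; rw [dist_comm]; exact hsync t ht
  have hself : ∀ ζ : ℝ → X, ∀ t ∈ Set.Icc (0:ℝ) L, dist (ζ t) (ζ t) ≤ ε := by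
    intro ζ t ht; simp; linarith
  apply Metric.diam_le_of_forall_dist_le (by linarith)
  intro u hu v hv
  rcases hu with hu | hu <;> rcases hv with hv | hv <;>
    obtain ⟨⟨s, hs, rfl⟩, hd⟩ := hu <;> obtain ⟨⟨t, ht, rfl⟩, hd'⟩ := hv
  · exact cross_bound δ hδ hgeo hthin ε L x γ γ hγ hγ (hself γ) hs ht hd hd'
  · exact cross_bound δ hδ hgeo hthin ε L x γ η hγ hη hsync hs ht hd hd'
  · rw [dist_comm]
    exact cross_bound δ hδ hgeo hthin ε L x γ η hγ hη hsync ht hs hd' hd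
  · exact cross_bound δ hδ hgeo hthin ε L x η η hη hη (hself η) hs ht hd hd'
end

section
/- Let X be a geodesic metric space, γ a geodesic with subsegments γ₁, γ₂ (γ₁ preceding γ₂ along γ), and let κ₁, κ₂ be geodesics K-fellow traveling with γ₁ and γ₂ respectively. Then the pair (κ₁, κ₂) is 6K-aligned: the projection of κ₂ onto κ₁ lies within 6K of the ending point of κ₁, and the projection of κ₁ onto κ₂ lies within 6K of the beginning point of κ₂. -/
open Metric Set

variable {X : Type*} [MetricSpace X]

/-- The pair of oriented geodesics `(γ₁|[0,L₁], γ₂|[0,L₂])` is `K`-aligned: every nearest-point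
projection of a point of `γ₂` onto `γ₁` lies within `K` of the ending point `γ₁ L₁`, and every
nearest-point projection of a point of `γ₁` onto `γ₂` lies within `K` of the beginning point
`γ₂ 0`. -/
def AlignedPair {X : Type*} [MetricSpace X] (K : ℝ) (γ₁ : ℝ → X) (L₁ : ℝ)
    (γ₂ : ℝ → X) (L₂ : ℝ) : Prop :=
  (∀ t ∈ Set.Icc 0 L₂, ∀ p ∈ projSet (γ₁ '' Set.Icc 0 L₁) (γ₂ t), dist p (γ₁ L₁) ≤ K) ∧
  (∀ t ∈ Set.Icc 0 L₁, ∀ p ∈ projSet (γ₂ '' Set.Icc 0 L₂) (γ₁ t), dist p (γ₂ 0) ≤ K)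


private lemma geodesic_continuousOn {X : Type*} [MetricSpace X] {f : ℝ → X} {c d : ℝ}
    (hf : IsGeodesicOn f c d) : ContinuousOn f (Set.Icc c d) := by
  refine LipschitzOnWith.continuousOn (K := 1) ?_
  rw [lipschitzOnWith_iff_dist_le_mul]
  intro s hs t ht
  rw [hf s hs t ht, Real.dist_eq]
  simp

private lemma exists_near {X : Type*} [MetricSpace X] {f g : ℝ → X} {c d c' d' K : ℝ}
    (hcd : c ≤ d) (hcd' : c' ≤ d') (hf : IsGeodesicOn f c d) (hg : IsGeodesicOn g c' d')
    (hH : Metric.hausdorffDist (f '' Set.Icc c d) (g '' Set.Icc c' d') ≤ K)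
    {t : ℝ} (ht : t ∈ Set.Icc c d) :
    ∃ s ∈ Set.Icc c' d', dist (f t) (g s) ≤ K := by
  have hcomp : IsCompact (g '' Set.Icc c' d') :=
    isCompact_Icc.image_of_continuousOn (geodesic_continuousOn hg)
  have hcomp' : IsCompact (f '' Set.Icc c d) :=
    isCompact_Icc.image_of_continuousOn (geodesic_continuousOn hf)
  have hne : (g '' Set.Icc c' d').Nonempty := (Set.nonempty_Icc.mpr hcd').image _
  have hfin : EMetric.hausdorffEdist (f '' Set.Icc c d) (g '' Set.Icc c' d') ≠ ⊤ :=
    Metric.hausdorffEdist_ne_top_of_nonempty_of_bounded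
      ((Set.nonempty_Icc.mpr hcd).image _) hne hcomp'.isBounded hcomp.isBounded
  have h1 : Metric.infDist (f t) (g '' Set.Icc c' d') ≤ K :=
    le_trans (Metric.infDist_le_hausdorffDist_of_mem (Set.mem_image_of_mem f ht) hfin) hH
  obtain ⟨y, hy, hdy⟩ := hcomp.exists_infDist_eq_dist hne (f t)
  obtain ⟨s, hs, rfl⟩ := hy
  exact ⟨s, hs, by rw [← hdy]; exact h1⟩

/-- If `γ₁, γ₂` are subsegments of a geodesic `γ` (with `γ₁` preceding `γ₂`) and `κ₁, κ₂` are
geodesics `K`-fellow traveling with `γ₁, γ₂` respectively, then `(κ₁, κ₂)` is `6K`-aligned. -/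
theorem alignedPair_of_fellow_traveling_subsegments
    (hgeo : GeodesicSpace X) (K : ℝ) (hK : 0 < K)
    (L : ℝ) (γ : ℝ → X) (hγ : IsGeodesicOn γ 0 L)
    (a₁ b₁ a₂ b₂ : ℝ) (h0 : 0 ≤ a₁) (h1 : a₁ ≤ b₁) (h2 : b₁ ≤ a₂) (h3 : a₂ ≤ b₂)
    (h4 : b₂ ≤ L)
    (κ₁ κ₂ : ℝ → X) (M₁ M₂ : ℝ) (hM₁ : 0 ≤ M₁) (hM₂ : 0 ≤ M₂)
    (hκ₁ : IsGeodesicOn κ₁ 0 M₁) (hκ₂ : IsGeodesicOn κ₂ 0 M₂)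
    (hft₁ : dist (κ₁ 0) (γ a₁) ≤ K ∧ dist (κ₁ M₁) (γ b₁) ≤ K ∧
      Metric.hausdorffDist (κ₁ '' Set.Icc 0 M₁) (γ '' Set.Icc a₁ b₁) ≤ K)
    (hft₂ : dist (κ₂ 0) (γ a₂) ≤ K ∧ dist (κ₂ M₂) (γ b₂) ≤ K ∧
      Metric.hausdorffDist (κ₂ '' Set.Icc 0 M₂) (γ '' Set.Icc a₂ b₂) ≤ K) :
    AlignedPair (6 * K) κ₁ M₁ κ₂ M₂ := by
  obtain ⟨he10, he11, hH1⟩ := hft₁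
  obtain ⟨he20, he21, hH2⟩ := hft₂
  have hγ₁ : IsGeodesicOn γ a₁ b₁ := fun s hs t ht =>
    hγ s ⟨by linarith [hs.1], by linarith [hs.2]⟩ t ⟨by linarith [ht.1], by linarith [ht.2]⟩
  have hγ₂ : IsGeodesicOn γ a₂ b₂ := fun s hs t ht =>
    hγ s ⟨by linarith [hs.1], by linarith [hs.2]⟩ t ⟨by linarith [ht.1], by linarith [ht.2]⟩
  constructor
  · intro t ht p hp
    obtain ⟨⟨u, hu, rfl⟩, hpd⟩ := hp
    -- find s ∈ [a₂,b₂] near κ₂ t, and v ∈ [a₁,b₁] near κ₁ u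
    obtain ⟨s, hs, hxs⟩ := exists_near hM₂ h3 hκ₂ hγ₂ hH2 ht
    obtain ⟨v, hv, hpv⟩ := exists_near hM₁ h1 hκ₁ hγ₁ hH1 hu
    -- the projection distance is at most the distance to the endpoint κ₁ M₁
    have hend : κ₁ M₁ ∈ κ₁ '' Set.Icc 0 M₁ :=
      Set.mem_image_of_mem κ₁ ⟨hM₁, le_refl _⟩
    have hle : dist (κ₂ t) (κ₁ u) ≤ dist (κ₂ t) (κ₁ M₁) := by
      rw [hpd]; exact Metric.infDist_le_dist_of_mem hend
    have d1 : dist (γ s) (γ b₁) = s - b₁ := by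
      rw [hγ s ⟨by linarith [hs.1], by linarith [hs.2]⟩ b₁ ⟨by linarith, by linarith⟩]
      rw [abs_of_nonneg (by linarith [hs.1])]
    have d2 : dist (γ v) (γ b₁) = b₁ - v := by
      rw [hγ v ⟨by linarith [hv.1], by linarith [hv.2]⟩ b₁ ⟨by linarith, by linarith⟩,
        abs_of_nonpos (by linarith [hv.2])]; ring
    have d3 : dist (γ s) (γ v) = s - v := by
      rw [hγ s ⟨by linarith [hs.1], by linarith [hs.2]⟩ v
        ⟨by linarith [hv.1], by linarith [hv.2]⟩, abs_of_nonneg (by linarith [hs.1, hv.2])]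
    -- upper bound on dist (κ₂ t) (κ₁ u)
    have hub : dist (κ₂ t) (κ₁ u) ≤ (s - b₁) + 2 * K := by
      have : dist (κ₂ t) (κ₁ M₁) ≤
          dist (κ₂ t) (γ s) + dist (γ s) (γ b₁) + dist (γ b₁) (κ₁ M₁) :=
        dist_triangle4 _ _ _ _
      rw [dist_comm (γ b₁) (κ₁ M₁)] at this
      linarith [hle, hxs, he11, d1]
    -- lower bound
    have hlb : (s - v) - 2 * K ≤ dist (κ₂ t) (κ₁ u) := by
      have : dist (γ s) (γ v) ≤ dist (γ s) (κ₂ t) + dist (κ₂ t) (κ₁ u) + dist (κ₁ u) (γ v) :=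
        dist_triangle4 _ _ _ _
      rw [d3, dist_comm (γ s) (κ₂ t)] at this
      linarith [hxs, hpv]
    have hbv : b₁ - v ≤ 4 * K := by linarith
    calc dist (κ₁ u) (κ₁ M₁)
        ≤ dist (κ₁ u) (γ v) + dist (γ v) (γ b₁) + dist (γ b₁) (κ₁ M₁) := dist_triangle4 _ _ _ _
      _ ≤ 6 * K := by rw [dist_comm (γ b₁) (κ₁ M₁), d2]; linarith [hpv, he11]
  · intro t ht p hp
    obtain ⟨⟨u, hu, rfl⟩, hpd⟩ := hp
    obtain ⟨s, hs, hxs⟩ := exists_near hM₁ h1 hκ₁ hγ₁ hH1 ht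
    obtain ⟨v, hv, hpv⟩ := exists_near hM₂ h3 hκ₂ hγ₂ hH2 hu
    have hend : κ₂ 0 ∈ κ₂ '' Set.Icc 0 M₂ :=
      Set.mem_image_of_mem κ₂ ⟨le_refl _, hM₂⟩
    have hle : dist (κ₁ t) (κ₂ u) ≤ dist (κ₁ t) (κ₂ 0) := by
      rw [hpd]; exact Metric.infDist_le_dist_of_mem hend
    have d1 : dist (γ s) (γ a₂) = a₂ - s := by
      rw [hγ s ⟨by linarith [hs.1], by linarith [hs.2]⟩ a₂ ⟨by linarith, by linarith⟩,
        abs_of_nonpos (by linarith [hs.2])]; ring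
    have d2 : dist (γ v) (γ a₂) = v - a₂ := by
      rw [hγ v ⟨by linarith [hv.1], by linarith [hv.2]⟩ a₂ ⟨by linarith, by linarith⟩,
        abs_of_nonneg (by linarith [hv.1])]
    have d3 : dist (γ s) (γ v) = v - s := by
      rw [hγ s ⟨by linarith [hs.1], by linarith [hs.2]⟩ v
        ⟨by linarith [hv.1], by linarith [hv.2]⟩, abs_of_nonpos (by linarith [hs.2, hv.1])]; ring
    have hub : dist (κ₁ t) (κ₂ u) ≤ (a₂ - s) + 2 * K := by
      have : dist (κ₁ t) (κ₂ 0) ≤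
          dist (κ₁ t) (γ s) + dist (γ s) (γ a₂) + dist (γ a₂) (κ₂ 0) :=
        dist_triangle4 _ _ _ _
      rw [dist_comm (γ a₂) (κ₂ 0)] at this
      linarith [hle, hxs, he20, d1]
    have hlb : (v - s) - 2 * K ≤ dist (κ₁ t) (κ₂ u) := by
      have : dist (γ s) (γ v) ≤ dist (γ s) (κ₁ t) + dist (κ₁ t) (κ₂ u) + dist (κ₂ u) (γ v) :=
        dist_triangle4 _ _ _ _
      rw [d3, dist_comm (γ s) (κ₁ t)] at this
      linarith [hxs, hpv]
    have hbv : v - a₂ ≤ 4 * K := by linarith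
    calc dist (κ₂ u) (κ₂ 0)
        ≤ dist (κ₂ u) (γ v) + dist (γ v) (γ a₂) + dist (γ a₂) (κ₂ 0) := dist_triangle4 _ _ _ _
      _ ≤ 6 * K := by rw [dist_comm (γ a₂) (κ₂ 0), d2]; linarith [hpv, he20]
end

section
/- Let X be a δ-hyperbolic geodesic space, x ∈ X, and let (γ₁, γ₂) be a K-aligned pair of finite oriented geodesics. Then either (x, γ₂) is (K+60δ)-aligned or (γ₁, x) is (K+60δ)-aligned. (Here a point is treated as a degenerate geodesic.) -/
open Metric Set

variable {X : Type*} [MetricSpace X]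

lemma gromovProduct_nonneg' (x y z : X) : 0 ≤ gromovProduct x y z := by
  have := dist_triangle x z y
  unfold gromovProduct; linarith

lemma gromovProduct_le_left' (x y z : X) : gromovProduct x y z ≤ dist x z := by
  have h := dist_triangle z x y
  rw [dist_comm z x] at h
  unfold gromovProduct; linarith

lemma gromovProduct_le_right' (x y z : X) : gromovProduct x y z ≤ dist z y := by
  have h := dist_triangle x z y  -- not quite; need dist x z - dist x y ≤ dist z y
  have h2 := dist_triangle x y z
  rw [dist_comm y z] at h2
  unfold gromovProduct; linarith

lemma subsegment' {γ : ℝ → X} {L : ℝ} (hγ : IsGeodesicOn γ 0 L)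
    {u v : ℝ} (hu : u ∈ Icc (0:ℝ) L) (hv : v ∈ Icc (0:ℝ) L) :
    ∃ σ : ℝ → X, GeodesicFromTo σ (γ u) (γ v) ∧
      ∀ t ∈ Icc 0 (dist (γ u) (γ v)), σ t ∈ γ '' Icc (0:ℝ) L := by
  have hd : dist (γ u) (γ v) = |u - v| := hγ u hu v hv
  rcases le_or_gt u v with h | h
  · have hd' : dist (γ u) (γ v) = v - u := by rw [hd, abs_of_nonpos (by linarith)]; ring
    refine ⟨fun t => γ (u + t), ⟨by simp, by rw [hd']; congr 1; ring, ?_⟩, ?_⟩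
    · intro s hs t ht
      rw [hd'] at hs ht
      have hsm : u + s ∈ Icc (0:ℝ) L := ⟨by linarith [hu.1, hs.1], by linarith [hv.2, hs.2]⟩
      have htm : u + t ∈ Icc (0:ℝ) L := ⟨by linarith [hu.1, ht.1], by linarith [hv.2, ht.2]⟩
      rw [hγ _ hsm _ htm]
      congr 1; ring
    · intro t ht
      rw [hd'] at ht
      exact ⟨u + t, ⟨by linarith [hu.1, ht.1], by linarith [hv.2, ht.2]⟩, rfl⟩
  · have hd' : dist (γ u) (γ v) = u - v := by rw [hd, abs_of_nonneg (by linarith)]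
    refine ⟨fun t => γ (u - t), ⟨by simp, by rw [hd']; congr 1; ring, ?_⟩, ?_⟩
    · intro s hs t ht
      rw [hd'] at hs ht
      have hsm : u - s ∈ Icc (0:ℝ) L := ⟨by linarith [hv.1, hs.2], by linarith [hu.2, hs.1]⟩
      have htm : u - t ∈ Icc (0:ℝ) L := ⟨by linarith [hv.1, ht.2], by linarith [hu.2, ht.1]⟩
      rw [hγ _ hsm _ htm, ← abs_neg]
      congr 1; ring
    · intro t ht
      rw [hd'] at ht
      exact ⟨u - t, ⟨by linarith [hv.1, ht.2], by linarith [hu.2, ht.1]⟩, rfl⟩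

lemma projSet_nonempty' {γ : ℝ → X} {L : ℝ} (hL : 0 ≤ L) (hγ : IsGeodesicOn γ 0 L) (x : X) :
    ∃ p, p ∈ projSet (γ '' Icc 0 L) x := by
  have hlip : LipschitzOnWith 1 γ (Icc 0 L) := by
    refine LipschitzOnWith.of_dist_le_mul fun s hs t ht => ?_
    rw [hγ s hs t ht, Real.dist_eq]
    simp
  have hcomp : IsCompact (γ '' Icc 0 L) := isCompact_Icc.image_of_continuousOn hlip.continuousOn
  have hne : (γ '' Icc 0 L).Nonempty := ⟨γ 0, mem_image_of_mem _ ⟨le_rfl, hL⟩⟩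
  obtain ⟨y, hy, hyd⟩ := hcomp.exists_infDist_eq_dist hne x
  exact ⟨y, hy, hyd.symm⟩

lemma proj_ineq' (δ : ℝ) (hgeo : GeodesicSpace X) (hthin : ThinTriangles X δ)
    {γ : ℝ → X} {L : ℝ} (hγ : IsGeodesicOn γ 0 L)
    {x p y : X} (hp : p ∈ projSet (γ '' Icc 0 L) x) (hy : y ∈ γ '' Icc 0 L) :
    dist x p + dist p y - dist x y ≤ 8 * δ := by
  obtain ⟨⟨u, hu, hup⟩, hpd⟩ := hp
  obtain ⟨v, hv, hvy⟩ := hy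
  subst hup hvy
  obtain ⟨α, hα⟩ := hgeo (γ u) x
  obtain ⟨σ, hσ, hσmem⟩ := subsegment' hγ hu hv
  set g := gromovProduct x (γ v) (γ u) with hgdef
  have hg0 : 0 ≤ g := gromovProduct_nonneg' _ _ _
  have hgl : g ≤ dist x (γ u) := gromovProduct_le_left' _ _ _
  have hgr : g ≤ dist (γ u) (γ v) := gromovProduct_le_right' _ _ _
  have hthin1 : dist (α g) (σ g) ≤ 4 * δ :=
    hthin x (γ u) (γ v) α σ hα hσ g ⟨hg0, le_rfl⟩
  have hαx : dist x (α g) = dist (γ u) x - g := by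
    have := hα.2.2 g ⟨hg0, by rwa [dist_comm] at hgl⟩ (dist (γ u) x) ⟨dist_nonneg, le_rfl⟩
    rw [hα.2.1] at this
    rw [dist_comm, this, abs_of_nonpos (by rw [dist_comm] at hgl; linarith)]
    ring
  have hσg : σ g ∈ γ '' Icc (0:ℝ) L := hσmem g ⟨hg0, hgr⟩
  have hinf : dist x (γ u) ≤ dist x (σ g) := by
    rw [hpd]; exact infDist_le_dist_of_mem hσg
  have htri : dist x (σ g) ≤ dist x (α g) + dist (α g) (σ g) := dist_triangle _ _ _
  have hcomm : dist (γ u) x = dist x (γ u) := dist_comm _ _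
  have : g ≤ 4 * δ := by linarith
  have hgval : g = (dist x (γ u) + dist (γ u) (γ v) - dist x (γ v)) / 2 := rfl
  linarith [hgval]

lemma gromov_bound' (δ : ℝ) (hδ : 0 ≤ δ) (hgeo : GeodesicSpace X) (hthin : ThinTriangles X δ)
    {γ : ℝ → X} {L : ℝ} (hγ : IsGeodesicOn γ 0 L)
    {x q p r : X} (hp : p ∈ projSet (γ '' Icc 0 L) x) (hr : r ∈ projSet (γ '' Icc 0 L) q)
    (hfar : 12 * δ < dist p r) :
    dist x p + dist p q - dist x q ≤ 16 * δ := by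
  obtain ⟨u, hu, hup⟩ := hp.1
  obtain ⟨v, hv, hvr⟩ := hr.1
  have hpmem : p ∈ γ '' Icc (0:ℝ) L := ⟨u, hu, hup⟩
  obtain ⟨α, hα⟩ := hgeo p x
  obtain ⟨β, hβ⟩ := hgeo p q
  obtain ⟨σ, hσ, hσmem⟩ := by
    have := subsegment' hγ hu hv
    rw [hup, hvr] at this
    exact this
  set g := gromovProduct x q p with hgdef
  have hg0 : 0 ≤ g := gromovProduct_nonneg' _ _ _
  have hgl : g ≤ dist x p := gromovProduct_le_left' _ _ _
  -- lemma A at r for q and p: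
  have hA : dist q r + dist r p - dist q p ≤ 8 * δ := proj_ineq' δ hgeo hthin hγ hr hpmem
  have hgrp : dist p r - 4 * δ ≤ gromovProduct q r p := by
    have h1 : dist q p = dist p q := dist_comm _ _
    have h2 : dist r p = dist p r := dist_comm _ _
    unfold gromovProduct; linarith
  set t₀ := min g (dist p r - 4 * δ) with ht₀def
  have ht₀0 : 0 ≤ t₀ := le_min hg0 (by linarith)
  have ht₀g : t₀ ≤ g := min_le_left _ _
  have ht₀r : t₀ ≤ dist p r - 4 * δ := min_le_right _ _
  have hthin1 : dist (α t₀) (β t₀) ≤ 4 * δ :=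
    hthin x p q α β hα hβ t₀ ⟨ht₀0, ht₀g⟩
  have hthin2 : dist (β t₀) (σ t₀) ≤ 4 * δ :=
    hthin q p r β σ hβ hσ t₀ ⟨ht₀0, le_trans ht₀r hgrp⟩
  have hσmem' : σ t₀ ∈ γ '' Icc (0:ℝ) L := hσmem t₀ ⟨ht₀0, by linarith⟩
  have hαx : dist x (α t₀) = dist p x - t₀ := by
    have hgl' : t₀ ≤ dist p x := by rw [dist_comm]; linarith
    have := hα.2.2 t₀ ⟨ht₀0, hgl'⟩ (dist p x) ⟨dist_nonneg, le_rfl⟩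
    rw [hα.2.1] at this
    rw [dist_comm, this, abs_of_nonpos (by linarith)]
    ring
  have hinf : dist x p ≤ dist x (σ t₀) := by
    rw [hp.2]; exact infDist_le_dist_of_mem hσmem'
  have htri : dist x (σ t₀) ≤ dist x (α t₀) + dist (α t₀) (β t₀) + dist (β t₀) (σ t₀) :=
    dist_triangle4 _ _ _ _
  have hcomm : dist p x = dist x p := dist_comm _ _
  have ht₀8 : t₀ ≤ 8 * δ := by linarith
  have hgle : g ≤ 8 * δ := by
    by_contra hcon
    push_neg at hcon
    have : (8:ℝ) * δ < t₀ := lt_min hcon (by linarith)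
    linarith
  have hgval : g = (dist x p + dist p q - dist x q) / 2 := rfl
  linarith [hgval]

/-- Behrstock-type dichotomy: if `(γ₁, γ₂)` is a `K`-aligned pair of geodesics in a
`δ`-hyperbolic geodesic space and `x ∈ X` (regarded as a degenerate geodesic), then either
`(x, γ₂)` is `(K+60δ)`-aligned or `(γ₁, x)` is `(K+60δ)`-aligned. -/
theorem behrstock_dichotomy (δ : ℝ) (hδ : 0 ≤ δ)
    (hgeo : GeodesicSpace X) (hthin : ThinTriangles X δ)
    (K : ℝ) (hK : 0 < K) (x : X)
    (γ₁ γ₂ : ℝ → X) (L₁ L₂ : ℝ) (hL₁ : 0 ≤ L₁) (hL₂ : 0 ≤ L₂)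
    (hγ₁ : IsGeodesicOn γ₁ 0 L₁) (hγ₂ : IsGeodesicOn γ₂ 0 L₂)
    (halign : AlignedPair K γ₁ L₁ γ₂ L₂) :
    AlignedPair (K + 60 * δ) (fun _ => x) 0 γ₂ L₂ ∨
      AlignedPair (K + 60 * δ) γ₁ L₁ (fun _ => x) 0 := by
  have hxproj : ∀ y : X, ∀ pp ∈ projSet ((fun _ : ℝ => x) '' Icc (0:ℝ) 0) y, pp = x := by
    intro y pp hpp
    obtain ⟨s, _, hs⟩ := hpp.1
    exact hs.symm
  by_cases hcase : ∀ p ∈ projSet (γ₂ '' Icc 0 L₂) x, dist p (γ₂ 0) ≤ K + 60 * δ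
  · left
    constructor
    · intro t ht pp hpp
      rw [hxproj _ pp hpp]
      simpa using by positivity
    · intro t ht pp hpp
      exact hcase pp hpp
  · right
    push_neg at hcase
    obtain ⟨p, hp, hpfar⟩ := hcase
    have hpmem := hp.1
    obtain ⟨tp, htp, htpp⟩ := hpmem
    have hsK : ∀ s ∈ projSet (γ₁ '' Icc 0 L₁) p, dist s (γ₁ L₁) ≤ K := by
      intro s hs
      apply halign.1 tp htp
      rwa [htpp]
    constructor
    · intro t ht q hq
      -- q ∈ projSet (γ₁ '' Icc 0 L₁) x (defeq)
      obtain ⟨tq, htq, htqq⟩ := hq.1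
      obtain ⟨r, hr⟩ := projSet_nonempty' hL₂ hγ₂ q
      have hrK : dist r (γ₂ 0) ≤ K := by
        apply halign.2 tq htq
        rwa [htqq]
      have hpr : 12 * δ < dist p r := by
        have := dist_triangle p r (γ₂ 0)
        have h2 : dist r (γ₂ 0) ≤ K := hrK
        linarith [dist_triangle p (γ₂ 0) r, dist_comm r (γ₂ 0) ▸ (le_refl (dist r (γ₂ 0)))]
      obtain ⟨s, hs⟩ := projSet_nonempty' hL₁ hγ₁ p
      have hsK' : dist s (γ₁ L₁) ≤ K := hsK s hs
      have hsmem : s ∈ γ₁ '' Icc (0:ℝ) L₁ := hs.1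
      have hqmem : q ∈ γ₁ '' Icc (0:ℝ) L₁ := hq.1
      have hgB : dist x p + dist p q - dist x q ≤ 16 * δ :=
        gromov_bound' δ hδ hgeo hthin hγ₂ hp hr hpr
      have hA1 : dist x q + dist q s - dist x s ≤ 8 * δ :=
        proj_ineq' δ hgeo hthin hγ₁ hq hsmem
      have hA2 : dist p s + dist s q - dist p q ≤ 8 * δ :=
        proj_ineq' δ hgeo hthin hγ₁ hs hqmem
      have htri : dist x s ≤ dist x p + dist p s := dist_triangle _ _ _
      have hcomm : dist s q = dist q s := dist_comm _ _
      have hqs : dist q s ≤ 16 * δ := by linarith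
      have htri2 : dist q (γ₁ L₁) ≤ dist q s + dist s (γ₁ L₁) := dist_triangle _ _ _
      linarith
    · intro t ht pp hpp
      rw [hxproj _ pp hpp]
      simpa using by positivity
end

section
/- Let F₃ = ⟨a,b,c⟩ be the free group of rank 3 with standard generating set S = {a,b,c}. For each n and each T with 0 ≤ T ≤ n, the number of elements g of word length exactly n whose translation length τ_S(g) is at most T satisfies: #{g : |g|_S = n, τ_S(g) ≤ T} ≤ 6·#B_S(n)/(1 + (n-T)/12). -/
open FreeGroup List

variable {α : Type*} [DecidableEq α]


/-- the "no cancellation" relation on letters -/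
def NC (x y : α × Bool) : Prop := ¬(x.1 = y.1 ∧ x.2 = !y.2)

instance : DecidableRel (NC (α := α)) := fun x y => by unfold NC; infer_instance

theorem reduce_eq_self_of_chain {l : List (α × Bool)} (h : List.Chain' NC l) :
    FreeGroup.reduce l = l := by
  induction l with
  | nil => rfl
  | cons x l ih =>
    have h' := (List.isChain_cons.1 h).2
    rw [FreeGroup.reduce.cons, ih h']
    cases l with
    | nil => rfl
    | cons y t =>
      have hxy : NC x y := (List.isChain_cons_cons.1 h).1
      simp only [NC] at hxy
      simp [if_neg hxy]

theorem chain_of_reduce_eq_self {l : List (α × Bool)} (h : FreeGroup.reduce l = l) :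
    List.Chain' NC l := by
  induction l with
  | nil => exact List.isChain_nil
  | cons x l ih =>
    rw [FreeGroup.reduce.cons] at h
    have hlen : (FreeGroup.reduce l).length ≤ l.length := (FreeGroup.reduce.red).length_le
    rcases hr : FreeGroup.reduce l with _ | ⟨y, t⟩
    · rw [hr] at h
      simp only [] at h
      have hl : l = [] := (List.cons.injEq .. ▸ h).2.symm
      rw [hl]
      exact List.isChain_singleton x
    · rw [hr] at h hlen
      change (if x.1 = y.1 ∧ x.2 = !y.2 then t else x :: y :: t) = x :: l at h
      by_cases hc : x.1 = y.1 ∧ x.2 = !y.2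
      · rw [if_pos hc] at h
        exfalso
        have := congrArg List.length h
        simp at this hlen
        omega
      · rw [if_neg hc] at h
        simp only [List.cons.injEq] at h
        have hl : l = y :: t := h.2.symm
        rw [hl]
        refine List.isChain_cons_cons.2 ⟨hc, ?_⟩
        rw [← hl]
        exact ih (hl ▸ hr)

theorem toWord_chain (g : FreeGroup α) : List.Chain' NC g.toWord :=
  chain_of_reduce_eq_self (FreeGroup.reduce_toWord g)

theorem toWord_mul_of_chain {u v : FreeGroup α} (h : List.Chain' NC (u.toWord ++ v.toWord)) :
    (u * v).toWord = u.toWord ++ v.toWord := by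
  conv_lhs => rw [← FreeGroup.mk_toWord (x := u), ← FreeGroup.mk_toWord (x := v)]
  rw [FreeGroup.mul_mk, FreeGroup.toWord_mk, reduce_eq_self_of_chain h]

theorem norm_def (g : FreeGroup α) : FreeGroup.norm g = g.toWord.length := rfl

/-- cyclically reduced -/
def CycRed (r : FreeGroup α) : Prop :=
  ∀ y ∈ r.toWord.getLast?, ∀ x ∈ r.toWord.head?, NC y x

theorem flatten_replicate_head? {β : Type*} (k : ℕ) (l : List β) :
    ∀ x ∈ (List.flatten (List.replicate k l)).head?, x ∈ l.head? := by
  induction k with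
  | zero => simp
  | succ k ih =>
    rw [List.replicate_succ, List.flatten_cons]
    cases l with
    | nil => simpa using ih
    | cons a t => simp

theorem flatten_replicate_getLast? {β : Type*} (k : ℕ) (l : List β) :
    ∀ x ∈ (List.flatten (List.replicate k l)).getLast?, x ∈ l.getLast? := by
  induction k with
  | zero => simp
  | succ k ih =>
    rw [List.replicate_succ, List.flatten_cons]
    intro x hx
    rcases List.eq_nil_or_concat (List.flatten (List.replicate k l)) with h | ⟨t, a, h⟩
    · rw [h, List.append_nil] at hx; exact hx
    · rw [h, List.getLast?_append_of_ne_nil _ (by simp)] at hx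
      exact ih x (h ▸ hx)

theorem toWord_pow {r : FreeGroup α} (h : CycRed r) (k : ℕ) :
    (r ^ k).toWord = List.flatten (List.replicate k r.toWord) := by
  induction k with
  | zero => simp [FreeGroup.toWord_one]
  | succ k ih =>
    rw [pow_succ', List.replicate_succ, List.flatten_cons, ← ih]
    refine toWord_mul_of_chain ?_
    rw [List.Chain', List.isChain_append]
    refine ⟨toWord_chain r, toWord_chain _, ?_⟩
    intro y hy x hx
    rw [ih] at hx
    exact h y hy x (flatten_replicate_head? k _ x hx)

theorem norm_pow_of_cycRed {r : FreeGroup α} (h : CycRed r) (k : ℕ) :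
    FreeGroup.norm (r ^ k) = k * FreeGroup.norm r := by
  rw [norm_def, toWord_pow h, List.length_flatten, List.map_replicate,
    List.sum_replicate, smul_eq_mul, norm_def]

theorem invRev_cons (x : α × Bool) (l : List (α × Bool)) :
    FreeGroup.invRev (x :: l) = FreeGroup.invRev l ++ [(x.1, !x.2)] := by
  simp [FreeGroup.invRev]

theorem list_decomp : ∀ N (l : List (α × Bool)), l.length ≤ N →
    ∃ u m : List (α × Bool), l = u ++ m ++ FreeGroup.invRev u ∧
      (∀ y ∈ m.getLast?, ∀ x ∈ m.head?, NC y x) := by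
  intro N
  induction N with
  | zero =>
    intro l hl
    refine ⟨[], l, by simp [FreeGroup.invRev], ?_⟩
    have : l = [] := List.length_eq_zero_iff.1 (Nat.le_zero.1 hl)
    subst this; simp
  | succ N ih =>
    intro l hl
    by_cases hc : ∀ y ∈ l.getLast?, ∀ x ∈ l.head?, NC y x
    · exact ⟨[], l, by simp [FreeGroup.invRev], hc⟩
    · push_neg at hc
      obtain ⟨y, hy, x, hx, hnc⟩ := hc
      unfold NC at hnc
      rw [not_not] at hnc
      have hx2 : l.head? = some x := Option.mem_def.1 hx
      have hy2 : l.getLast? = some y := Option.mem_def.1 hy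
      have hln : l ≠ [] := by rintro rfl; simp at hx2
      have hlen2 : 2 ≤ l.length := by
        rcases l with _ | ⟨a, _ | ⟨b, t⟩⟩
        · simp at hx2
        · simp at hx2 hy2
          rw [← hx2, ← hy2] at hnc
          simp at hnc
        · simp
      have htn : l.tail ≠ [] := by
        rcases l with _ | ⟨a, t⟩
        · simp at hx2
        · simp only [List.tail_cons]
          rintro rfl
          simp at hlen2
      set mid := (l.tail).dropLast with hmid
      have h3 : l.head hln = x := by
        have h := List.head?_eq_head hln; rw [hx2] at h; exact (Option.some_inj.1 h).symm
      have h4 : l.tail.getLast htn = y := by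
        rw [List.getLast_tail htn]
        have h5 := List.getLast?_eq_getLast hln
        rw [hy2] at h5
        exact (Option.some_inj.1 h5).symm
      have h1 : l = l.head hln :: l.tail := (List.cons_head_tail hln).symm
      have h2 : l.tail = mid ++ [l.tail.getLast htn] := (List.dropLast_concat_getLast htn).symm
      have hdecl : l = x :: (mid ++ [y]) := by
        conv_lhs => rw [h1]
        rw [h3]
        conv_lhs => rw [h2]
        rw [h4]
      have hmlen : mid.length + 2 = l.length := by
        rw [hdecl]; simp
      obtain ⟨u, m, hum, hcyc⟩ := ih mid (by omega)
      refine ⟨x :: u, m, ?_, hcyc⟩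
      rw [_root_.invRev_cons, hdecl, hum]
      have hyx : y = (x.1, !x.2) := by
        ext
        · exact hnc.1
        · exact hnc.2
      rw [hyx]
      simp

theorem group_decomp (g : FreeGroup α) : ∃ w r : FreeGroup α,
    g = w * r * w⁻¹ ∧ CycRed r ∧
    g.toWord = w.toWord ++ r.toWord ++ FreeGroup.invRev w.toWord ∧
    (w * r).toWord = w.toWord ++ r.toWord := by
  obtain ⟨u, m, hum, hcyc⟩ := list_decomp g.toWord.length g.toWord le_rfl
  have hchain : List.Chain' NC (u ++ m ++ FreeGroup.invRev u) := hum ▸ toWord_chain g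
  have hum2 : List.Chain' NC (u ++ m) := hchain.prefix ⟨FreeGroup.invRev u, rfl⟩
  have hu : List.Chain' NC u := hum2.prefix ⟨m, rfl⟩
  have hm : List.Chain' NC m := hum2.suffix ⟨u, rfl⟩
  refine ⟨FreeGroup.mk u, FreeGroup.mk m, ?_, ?_, ?_, ?_⟩
  · rw [FreeGroup.inv_mk, FreeGroup.mul_mk, FreeGroup.mul_mk, ← FreeGroup.mk_toWord (x := g), hum]
  · intro y hy x hx
    rw [FreeGroup.toWord_mk, reduce_eq_self_of_chain hm] at hy hx
    exact hcyc y hy x hx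
  · rw [FreeGroup.toWord_mk, FreeGroup.toWord_mk, reduce_eq_self_of_chain hm,
      reduce_eq_self_of_chain hu, hum]
  · rw [FreeGroup.mul_mk, FreeGroup.toWord_mk, FreeGroup.toWord_mk, FreeGroup.toWord_mk,
      reduce_eq_self_of_chain hm, reduce_eq_self_of_chain hu, reduce_eq_self_of_chain hum2]

theorem norm_conj_pow {w r : FreeGroup α}
    (hword : (w * r * w⁻¹).toWord = w.toWord ++ r.toWord ++ FreeGroup.invRev w.toWord)
    (hr : CycRed r) (k : ℕ) (hk : 1 ≤ k) :
    FreeGroup.norm ((w * r * w⁻¹) ^ k) =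
      2 * FreeGroup.norm w + k * FreeGroup.norm r := by
  by_cases hrnil : r.toWord = []
  · have hr1 : r = 1 := FreeGroup.toWord_eq_nil_iff.1 hrnil
    subst hr1
    have hw : w.toWord = [] := by
      rw [hrnil] at hword
      simp only [mul_one, mul_inv_cancel, FreeGroup.toWord_one, List.append_nil] at hword
      rcases List.append_eq_nil_iff.1 hword.symm with ⟨h1, _⟩
      exact h1
    have hw1 : w = 1 := FreeGroup.toWord_eq_nil_iff.1 hw
    subst hw1
    simp [FreeGroup.norm_one]
  · set l := w.toWord with hl
    set m := r.toWord with hm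
    set fl := List.flatten (List.replicate k m) with hfl
    have hflne : fl ≠ [] := by
      rw [hfl]
      cases k with
      | zero => omega
      | succ k =>
        rw [List.replicate_succ, List.flatten_cons]
        intro hcon
        exact hrnil (List.append_eq_nil_iff.1 hcon).1
    have hchain0 : List.Chain' NC (l ++ m ++ FreeGroup.invRev l) := by
      rw [← hword]; exact toWord_chain _
    have h1 := List.isChain_append.1 hchain0
    have h2 := List.isChain_append.1 h1.1
    -- boundaries
    have hbd1 : ∀ y ∈ l.getLast?, ∀ x ∈ m.head?, NC y x := h2.2.2
    have hbd2 : ∀ y ∈ m.getLast?, ∀ x ∈ (FreeGroup.invRev l).head?, NC y x := by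
      intro y hy x hx
      refine h1.2.2 y ?_ x hx
      rw [List.getLast?_append_of_ne_nil _ hrnil]
      exact hy
    have hchain : List.Chain' NC (l ++ fl ++ FreeGroup.invRev l) := by
      rw [List.Chain', List.isChain_append, List.isChain_append]
      refine ⟨⟨toWord_chain w, ?_, ?_⟩, ?_, ?_⟩
      · rw [hfl, ← toWord_pow hr]; exact toWord_chain _
      · intro y hy x hx
        exact hbd1 y hy x (flatten_replicate_head? k m x hx)
      · have : (w⁻¹).toWord = FreeGroup.invRev l := by rw [FreeGroup.toWord_inv]
        rw [← this]; exact toWord_chain _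
      · intro y hy x hx
        rw [List.getLast?_append_of_ne_nil _ hflne] at hy
        exact hbd2 y (flatten_replicate_getLast? k m y hy) x hx
    have heq : (w * r * w⁻¹) ^ k = FreeGroup.mk (l ++ fl ++ FreeGroup.invRev l) := by
      rw [conj_pow, ← FreeGroup.mul_mk, ← FreeGroup.mul_mk]
      congr 1
      · congr 1
        · exact (FreeGroup.mk_toWord).symm
        · rw [hfl, ← toWord_pow hr]; exact (FreeGroup.mk_toWord).symm
      · rw [← FreeGroup.inv_mk, hl, FreeGroup.mk_toWord]
    rw [heq, norm_def, FreeGroup.toWord_mk, reduce_eq_self_of_chain hchain]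
    simp only [List.length_append, FreeGroup.invRev_length, hfl, List.length_flatten,
      List.map_replicate, List.sum_replicate, smul_eq_mul]
    rw [norm_def, norm_def, ← hl, ← hm]
    ring

theorem translationLength_conj {w r : FreeGroup (Fin 3)}
    (hword : (w * r * w⁻¹).toWord = w.toWord ++ r.toWord ++ FreeGroup.invRev w.toWord)
    (hr : CycRed r) :
    Filter.liminf (fun n : ℕ => (FreeGroup.norm ((w * r * w⁻¹) ^ n) : ℝ) / n) Filter.atTop
      = (FreeGroup.norm r : ℝ) := by
  apply Filter.Tendsto.liminf_eq
  have hev : (fun n : ℕ => (FreeGroup.norm ((w * r * w⁻¹) ^ n) : ℝ) / n)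
      =ᶠ[Filter.atTop] fun n : ℕ => (2 * FreeGroup.norm w : ℝ) / n + FreeGroup.norm r := by
    filter_upwards [Filter.eventually_ge_atTop 1] with n hn
    rw [norm_conj_pow hword hr n hn]
    have hn0 : (n : ℝ) ≠ 0 := by positivity
    push_cast
    field_simp
  rw [Filter.tendsto_congr' hev]
  have := (tendsto_const_div_atTop_nhds_zero_nat (2 * FreeGroup.norm w : ℝ)).add
    (tendsto_const_nhds (x := (FreeGroup.norm r : ℝ)) (f := Filter.atTop (α := ℕ)))
  simpa using this

abbrev FBall (n : ℕ) : Set (FreeGroup (Fin 3)) := {g | FreeGroup.norm g ≤ n}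

theorem fball_finite (n : ℕ) : (FBall n).Finite := by
  have : FBall n = FreeGroup.toWord ⁻¹' {l | l.length ≤ n} := rfl
  rw [this]
  exact Set.Finite.preimage (FreeGroup.toWord_injective.injOn) (List.finite_length_le _ n)

noncomputable instance (n : ℕ) : Finite (FBall n) := (fball_finite n).to_subtype

/-- the forbidden next letter -/
def forb (g : FreeGroup (Fin 3)) : Fin 3 × Bool :=
  match g.toWord.getLast? with
  | some x => (x.1, !x.2)
  | none => (0, true)

noncomputable def eqv5 (a : Fin 3 × Bool) : Fin 5 ≃ {s : Fin 3 × Bool // s ≠ a} :=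
  (Fintype.equivFinOfCardEq (by simp [Fintype.card_subtype_compl])).symm

theorem append_letter_toWord (g : FreeGroup (Fin 3)) {s : Fin 3 × Bool} (hs : s ≠ forb g) :
    (g * FreeGroup.mk [s]).toWord = g.toWord ++ [s] := by
  have h1 : (FreeGroup.mk [s]).toWord = [s] := by
    rw [FreeGroup.toWord_mk]; rfl
  rw [← h1]
  apply toWord_mul_of_chain
  rw [h1, List.Chain', List.isChain_append]
  refine ⟨toWord_chain g, List.isChain_singleton s, ?_⟩
  intro y hy x hx
  have hx' : s = x := by simpa using hx
  subst hx'
  intro ⟨hc1, hc2⟩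
  apply hs
  have hsome : g.toWord.getLast? = some y := Option.mem_def.1 hy
  have hf : forb g = (y.1, !y.2) := by simp only [forb, hsome]
  rw [hf]
  exact Prod.ext_iff.2 ⟨hc1.symm, by simp [hc2]⟩

noncomputable def ballStep (n : ℕ) (p : FBall n × Fin 5) : FBall (n + 1) :=
  ⟨p.1.1 * FreeGroup.mk [(eqv5 (forb p.1.1) p.2).1], by
    have hs := (eqv5 (forb p.1.1) p.2).2
    have := append_letter_toWord p.1.1 hs
    simp only [Set.mem_setOf_eq, norm_def, this, List.length_append, List.length_singleton]
    have := p.1.2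
    simp only [Set.mem_setOf_eq, norm_def] at this
    omega⟩

theorem ballStep_injective (n : ℕ) : Function.Injective (ballStep n) := by
  rintro ⟨⟨g, hg⟩, i⟩ ⟨⟨g', hg'⟩, i'⟩ h
  have h0 : g * FreeGroup.mk [(eqv5 (forb g) i).1] = g' * FreeGroup.mk [(eqv5 (forb g') i').1] :=
    congrArg Subtype.val h
  have hw := congrArg FreeGroup.toWord h0
  rw [append_letter_toWord g (eqv5 (forb g) i).2,
    append_letter_toWord g' (eqv5 (forb g') i').2] at hw
  have hlen : g.toWord.length = g'.toWord.length := by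
    have := congrArg List.length hw
    simp at this
    omega
  obtain ⟨hw1, hw2⟩ := List.append_inj hw hlen
  have hgg : g = g' := FreeGroup.toWord_injective hw1
  subst hgg
  have hss : (eqv5 (forb g) i) = (eqv5 (forb g) i') :=
    Subtype.ext (List.singleton_injective hw2)
  have : i = i' := (eqv5 (forb g)).injective hss
  simp [this]

theorem fball_growth (n : ℕ) : 5 * Nat.card (FBall n) ≤ Nat.card (FBall (n + 1)) := by
  have := Nat.card_le_card_of_injective _ (ballStep_injective n)
  rwa [Nat.card_prod, Nat.card_eq_fintype_card (α := Fin 5), Fintype.card_fin, mul_comm] at this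

theorem fball_growth_pow (k d : ℕ) :
    5 ^ d * Nat.card (FBall k) ≤ Nat.card (FBall (k + d)) := by
  induction d with
  | zero => simp
  | succ d ih =>
    calc 5 ^ (d + 1) * Nat.card (FBall k) = 5 * (5 ^ d * Nat.card (FBall k)) := by ring
    _ ≤ 5 * Nat.card (FBall (k + d)) := by omega
    _ ≤ Nat.card (FBall (k + d + 1)) := fball_growth _


noncomputable def decW (g : FreeGroup (Fin 3)) : FreeGroup (Fin 3) := (group_decomp g).choose
noncomputable def decR (g : FreeGroup (Fin 3)) : FreeGroup (Fin 3) :=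
  (group_decomp g).choose_spec.choose

theorem dec_spec (g : FreeGroup (Fin 3)) :
    g = decW g * decR g * (decW g)⁻¹ ∧ CycRed (decR g) ∧
    g.toWord = (decW g).toWord ++ (decR g).toWord ++ FreeGroup.invRev (decW g).toWord ∧
    (decW g * decR g).toWord = (decW g).toWord ++ (decR g).toWord :=
  (group_decomp g).choose_spec.choose_spec

/-- The translation length of `g` in the free group with respect to the word norm
(given by reduced word length), defined as `liminf |gⁿ|/n`. -/
noncomputable def freeTranslationLength (g : FreeGroup (Fin 3)) : ℝ :=
  Filter.liminf (fun n : ℕ => (FreeGroup.norm (g ^ n) : ℝ) / n) Filter.atTop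

theorem freeTranslationLength_eq (g : FreeGroup (Fin 3)) :
    freeTranslationLength g = (FreeGroup.norm (decR g) : ℝ) := by
  obtain ⟨hg, hcyc, hword, -⟩ := dec_spec g
  rw [freeTranslationLength]
  conv_lhs => rw [hg]
  exact translationLength_conj (hg ▸ hword) hcyc

/-- In the free group `F₃` with its standard generating set, the number of elements of word
length exactly `n` with translation length at most `T` is at most
`6 · #B_S(n) / (1 + (n-T)/12)`. -/
theorem free_group_small_translation_count (n : ℕ) (T : ℝ) (hT0 : 0 ≤ T) (hTn : T ≤ n) :
    (Nat.card {g : FreeGroup (Fin 3) |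
        FreeGroup.norm g = n ∧ freeTranslationLength g ≤ T} : ℝ)
      ≤ 6 * (Nat.card {g : FreeGroup (Fin 3) | FreeGroup.norm g ≤ n} : ℝ)
          / (1 + ((n : ℝ) - T) / 12) := by
  classical
  set f : ℕ := Nat.floor T with hf
  have hfn : f ≤ n := by
    have : T ≤ (n : ℝ) := hTn
    exact Nat.floor_le_of_le this |>.trans (by simp)
  set j : ℕ := (n + f) / 2 with hj
  have hjn : j ≤ n := by omega
  set d : ℕ := n - j with hd
  -- key numeric facts for elements of the small set
  have key : ∀ g : FreeGroup (Fin 3), FreeGroup.norm g = n → freeTranslationLength g ≤ T →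
      FreeGroup.norm (decW g * decR g) ≤ j ∧
      2 * (decW g).toWord.length + (decR g).toWord.length = n := by
    intro g hgn hgt
    obtain ⟨hg, hcyc, hword, hwr⟩ := dec_spec g
    have hc : (FreeGroup.norm (decR g) : ℝ) ≤ T := by
      rw [← freeTranslationLength_eq g]; exact hgt
    have hcf : FreeGroup.norm (decR g) ≤ f := Nat.le_floor hc
    have hlen : 2 * (decW g).toWord.length + (decR g).toWord.length = n := by
      have := congrArg List.length hword
      simp only [List.length_append, FreeGroup.invRev_length] at this
      rw [norm_def] at hgn
      omega
    constructor
    · rw [norm_def, hwr, List.length_append]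
      rw [norm_def] at hcf
      omega
    · exact hlen
  -- the injection from the small set into the ball of radius j
  set Small := {g : FreeGroup (Fin 3) |
      FreeGroup.norm g = n ∧ freeTranslationLength g ≤ T} with hSmall
  have hcard1 : Nat.card Small ≤ Nat.card (FBall j) := by
    apply Nat.card_le_card_of_injective
      (f := fun g : Small => (⟨decW g.1 * decR g.1, (key g.1 g.2.1 g.2.2).1⟩ : FBall j))
    rintro ⟨g₁, hg₁⟩ ⟨g₂, hg₂⟩ hF
    have h0 : decW g₁ * decR g₁ = decW g₂ * decR g₂ := congrArg Subtype.val hF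
    obtain ⟨ha, -, -, hwr1⟩ := dec_spec g₁
    obtain ⟨hb, -, -, hwr2⟩ := dec_spec g₂
    have hw := congrArg FreeGroup.toWord h0
    rw [hwr1, hwr2] at hw
    have hn1 := (key g₁ hg₁.1 hg₁.2).2
    have hn2 := (key g₂ hg₂.1 hg₂.2).2
    have hlen12 : (decW g₁ * decR g₁).toWord.length = (decW g₂ * decR g₂).toWord.length := by
      rw [h0]
    rw [hwr1, hwr2] at hlen12
    simp only [List.length_append] at hlen12
    have hlw : (decW g₁).toWord.length = (decW g₂).toWord.length := by omega
    obtain ⟨he1, he2⟩ := List.append_inj hw hlw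
    have hww : decW g₁ = decW g₂ := FreeGroup.toWord_injective he1
    have hrr : decR g₁ = decR g₂ := FreeGroup.toWord_injective he2
    apply Subtype.ext
    calc g₁ = decW g₁ * decR g₁ * (decW g₁)⁻¹ := ha
    _ = decW g₂ * decR g₂ * (decW g₂)⁻¹ := by rw [hww, hrr]
    _ = g₂ := hb.symm
  have hcard2 : 5 ^ d * Nat.card (FBall j) ≤ Nat.card (FBall n) := by
    have := fball_growth_pow j d
    rwa [show j + d = n by omega] at this
  -- real arithmetic
  have hD : (0 : ℝ) < 1 + ((n : ℝ) - T) / 12 := by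
    have : T ≤ (n : ℝ) := hTn
    nlinarith
  rw [le_div_iff₀ hD]
  have hA : (Nat.card Small : ℝ) ≤ (Nat.card (FBall j) : ℝ) := by exact_mod_cast hcard1
  have hBd : ((5 : ℝ)) ^ d * (Nat.card (FBall j) : ℝ) ≤ (Nat.card (FBall n) : ℝ) := by
    exact_mod_cast hcard2
  have hdT : ((n : ℝ) - T) ≤ 2 * d := by
    have h2j : (2 * j : ℝ) ≤ (n : ℝ) + T := by
      have : (2 * j : ℕ) ≤ n + f := by omega
      have h2 : ((2 * j : ℕ) : ℝ) ≤ ((n + f : ℕ) : ℝ) := by exact_mod_cast this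
      push_cast at h2
      have : (f : ℝ) ≤ T := Nat.floor_le hT0
      linarith
    have : (d : ℝ) = (n : ℝ) - j := by
      rw [hd]; push_cast [Nat.cast_sub hjn]; ring
    linarith
  have hpow : (1 : ℝ) + 4 * d ≤ 5 ^ d := by
    have := one_add_mul_le_pow (a := (4 : ℝ)) (by norm_num) d
    calc (1 : ℝ) + 4 * d = 1 + d * 4 := by ring
    _ ≤ (1 + 4) ^ d := this
    _ = 5 ^ d := by norm_num
  have hDle : 1 + ((n : ℝ) - T) / 12 ≤ 6 * 5 ^ d := by nlinarith
  calc (Nat.card Small : ℝ) * (1 + ((n : ℝ) - T) / 12)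
      ≤ (Nat.card (FBall j) : ℝ) * (6 * 5 ^ d) := by
        apply mul_le_mul hA hDle (le_of_lt hD) (by positivity)
    _ = 6 * ((5 : ℝ) ^ d * (Nat.card (FBall j) : ℝ)) := by ring
    _ ≤ 6 * (Nat.card (FBall n) : ℝ) := by nlinarith
end

section
/- Let X be a geodesic metric space, let γ be a K-strongly contracting geodesic in X, let x, y ∈ X, let p ∈ π_γ(x), q ∈ π_γ(y), and suppose d(p,q) > 10K. Then any geodesic [x,y] intersects the closed 10K-neighborhood of γ. -/
open Metric Set

variable {X : Type*} [MetricSpace X]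

/-- A subset `A` of `X` is `K`-strongly contracting if for every `x` with `d(x,A) > K`, the
nearest-point projection to `A` of the open ball of radius `d(x,A)` centered at `x` has
diameter at most `K`. -/
def StronglyContractingSet {X : Type*} [MetricSpace X] (K : ℝ) (A : Set X) : Prop :=
  ∀ x : X, Metric.infDist x A > K →
    Metric.diam (⋃ b ∈ Metric.ball x (Metric.infDist x A), projSet A b) ≤ K

lemma projSet_nonempty'_s12 {A : Set X} (hA : IsCompact A) (hne : A.Nonempty) (z : X) :
    (projSet A z).Nonempty := by
  obtain ⟨w, hwA, hw⟩ := hA.exists_infDist_eq_dist hne z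
  exact ⟨w, hwA, hw.symm⟩

lemma core_lemma' {K : ℝ} {A : Set X} (hA : IsCompact A) (hK0 : 0 ≤ K)
    (hcontr : StronglyContractingSet K A) {z w pz pw : X}
    (hpz : pz ∈ projSet A z) (hpw : pw ∈ projSet A w)
    (hK : K < infDist z A) (hzw : dist z w < infDist z A) :
    dist pz pw ≤ K := by
  have hdiam := hcontr z hK
  have hb : Bornology.IsBounded (⋃ b ∈ Metric.ball z (infDist z A), projSet A b) := by
    refine hA.isBounded.subset ?_
    intro t ht
    simp only [mem_iUnion] at ht
    obtain ⟨b, _, htb⟩ := ht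
    exact htb.1
  have h1 : pz ∈ ⋃ b ∈ Metric.ball z (infDist z A), projSet A b := by
    refine mem_iUnion₂.mpr ⟨z, ?_, hpz⟩
    simp only [Metric.mem_ball, dist_self]
    linarith
  have h2 : pw ∈ ⋃ b ∈ Metric.ball z (infDist z A), projSet A b :=
    mem_iUnion₂.mpr ⟨w, by simpa [Metric.mem_ball, dist_comm] using hzw, hpw⟩
  exact le_trans (Metric.dist_le_diam_of_mem hb h1 h2) hdiam


/-- If `γ` is a `K`-strongly contracting geodesic, `p ∈ π_γ(x)`, `q ∈ π_γ(y)` and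
`d(p,q) > 10K`, then any geodesic `[x,y]` meets the closed `10K`-neighborhood of `γ`. -/
theorem geodesic_meets_neighborhood_of_contracting (hgeo : GeodesicSpace X)
    (K : ℝ) (hK : 0 < K) (L : ℝ) (hL : 0 ≤ L) (γ : ℝ → X) (hγ : IsGeodesicOn γ 0 L)
    (hcontr : StronglyContractingSet K (γ '' Set.Icc 0 L))
    (x y p q : X) (hp : p ∈ projSet (γ '' Set.Icc 0 L) x)
    (hq : q ∈ projSet (γ '' Set.Icc 0 L) y) (hpq : dist p q > 10 * K)
    (α : ℝ → X) (hα : GeodesicFromTo α x y) :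
    ∃ u ∈ Set.Icc 0 (dist x y), Metric.infDist (α u) (γ '' Set.Icc 0 L) ≤ 10 * K := by
  obtain ⟨hx0, hxT, hiso⟩ := hα
  set A : Set X := γ '' Set.Icc 0 L with hAdef
  have hT0 : (0:ℝ) ≤ dist x y := dist_nonneg
  set T : ℝ := dist x y with hTdef
  clear_value T
  by_contra hcon
  push_neg at hcon
  -- hcon : ∀ u ∈ Icc 0 T, 10*K < infDist (α u) A
  -- compactness of A
  have hAcomp : IsCompact A := by
    refine isCompact_Icc.image_of_continuousOn ?_
    have : LipschitzOnWith 1 γ (Set.Icc 0 L) := by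
      rw [lipschitzOnWith_iff_dist_le_mul]
      intro s hs t ht
      rw [hγ s hs t ht, Real.dist_eq, NNReal.coe_one, one_mul]
    exact this.continuousOn
  have hAne : A.Nonempty := ⟨γ 0, ⟨0, ⟨le_refl 0, hL⟩, rfl⟩⟩
  have hK0 : (0:ℝ) ≤ K := le_of_lt hK
  -- distance along alpha
  have hdistα : ∀ u ∈ Set.Icc 0 T, ∀ v ∈ Set.Icc 0 T, dist (α u) (α v) = |u - v| := hiso
  -- clamp and g
  set cl : ℝ → ℝ := fun u => max 0 (min u T) with hcldef
  have hclmem : ∀ u, cl u ∈ Set.Icc 0 T := by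
    intro u
    exact ⟨le_max_left _ _, max_le hT0 (min_le_right u T)⟩
  have hclid : ∀ u ∈ Set.Icc 0 T, cl u = u := by
    intro u hu
    simp only [hcldef]
    rw [min_eq_left hu.2, max_eq_right hu.1]
  set g : ℝ → ℝ := fun u => infDist (α (cl u)) A with hgdef
  have hgcont : Continuous g := by
    have h1 : LipschitzWith 1 (fun u => α (cl u)) := by
      rw [lipschitzWith_iff_dist_le_mul]
      intro s t
      rw [hdistα (cl s) (hclmem s) (cl t) (hclmem t), NNReal.coe_one, one_mul, Real.dist_eq]
      have l1 : |min s T - min t T| ≤ |s - t| :=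
        (abs_min_sub_min_le_max s T t T).trans (by simp)
      have l2 : |cl s - cl t| ≤ |min s T - min t T| := by
        simpa [hcldef, max_comm] using abs_max_sub_max_le_abs (min s T) (min t T) 0
      linarith
    exact (continuous_infDist_pt A).comp h1.continuous
  have hgeq : ∀ u ∈ Set.Icc 0 T, g u = infDist (α u) A := by
    intro u hu
    simp only [hgdef, hclid u hu]
  have H : ∀ u ∈ Set.Icc 0 T, 10 * K < g u := by
    intro u hu
    rw [hgeq u hu]
    exact hcon u hu
  -- Lipschitz of infDist along alpha
  have hlip : ∀ u ∈ Set.Icc 0 T, ∀ v ∈ Set.Icc 0 T,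
      infDist (α u) A ≤ infDist (α v) A + |u - v| := by
    intro u hu v hv
    have h1 : infDist (α u) A ≤ infDist (α v) A + dist (α u) (α v) :=
      infDist_le_infDist_add_dist
    rwa [hdistα u hu v hv] at h1
  have hglip : ∀ u ∈ Set.Icc 0 T, ∀ v ∈ Set.Icc 0 T, g u ≤ g v + |u - v| := by
    intro u hu v hv
    rw [hgeq u hu, hgeq v hv]
    exact hlip u hu v hv
  -- the sets Sa, Sb
  set Sa : Set ℝ := {u ∈ Set.Icc 0 T | g u ≤ u} with hSadef
  set Sb : Set ℝ := {u ∈ Set.Icc 0 T | g u ≤ T - u} with hSbdef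
  have hSaclosed : IsClosed Sa := by
    have : Sa = Set.Icc 0 T ∩ {u | g u ≤ u} := rfl
    rw [this]
    exact isClosed_Icc.inter (isClosed_le hgcont continuous_id)
  have hSbclosed : IsClosed Sb := by
    have : Sb = Set.Icc 0 T ∩ {u | g u ≤ T - u} := rfl
    rw [this]
    exact isClosed_Icc.inter (isClosed_le hgcont (continuous_const.sub continuous_id))
  have hTmem : T ∈ Set.Icc 0 T := ⟨hT0, le_refl T⟩
  have h0mem : (0:ℝ) ∈ Set.Icc 0 T := ⟨le_refl 0, hT0⟩
  -- Sa nonempty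
  by_cases hSane : Sa.Nonempty
  swap
  · -- g T > T, contradiction
    have hTa : ¬ (g T ≤ T) := fun h => hSane ⟨T, hTmem, h⟩
    push_neg at hTa
    rw [hgeq T hTmem, hxT] at hTa
    have hcore : dist q p ≤ K := by
      refine core_lemma' hAcomp hK0 hcontr hq hp ?_ ?_
      · calc K < 10 * K := by linarith
          _ < infDist y A := by
            have := hcon T hTmem; rwa [hxT] at this
      · rw [dist_comm, ← hTdef]; exact hTa
    rw [dist_comm] at hcore
    linarith
  by_cases hSbne : Sb.Nonempty
  swap
  · have h0b : ¬ (g 0 ≤ T - 0) := fun h => hSbne ⟨0, h0mem, h⟩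
    push_neg at h0b
    rw [hgeq 0 h0mem, hx0, sub_zero] at h0b
    have hcore : dist p q ≤ K := by
      refine core_lemma' hAcomp hK0 hcontr hp hq ?_ ?_
      · calc K < 10 * K := by linarith
          _ < infDist x A := by
            have := hcon 0 h0mem; rwa [hx0] at this
      · rw [← hTdef]; exact h0b
    linarith
  -- a and b
  set a : ℝ := sInf Sa with hadef
  set b : ℝ := sSup Sb with hbdef
  have hSabdd : BddBelow Sa := (bddBelow_Icc : BddBelow (Set.Icc (0:ℝ) T)).mono (fun u hu => hu.1)
  have hSbbdd : BddAbove Sb := (bddAbove_Icc (a := (0:ℝ)) (b := T)).mono (fun u hu => hu.1)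
  clear_value a b
  have haSa : a ∈ Sa := by rw [hadef]; exact hSaclosed.csInf_mem hSane hSabdd
  have hbSb : b ∈ Sb := by rw [hbdef]; exact hSbclosed.csSup_mem hSbne hSbbdd
  have haIcc : a ∈ Set.Icc 0 T := haSa.1
  have hbIcc : b ∈ Set.Icc 0 T := hbSb.1
  have hga : 10 * K < g a := H a haIcc
  have hgb : 10 * K < g b := H b hbIcc
  have hlt_a : ∀ u ∈ Set.Icc 0 T, u < a → u < g u := by
    intro u hu hua
    by_contra h
    push_neg at h
    have : a ≤ u := by rw [hadef]; exact csInf_le hSabdd ⟨hu, h⟩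
    linarith
  have hgt_b : ∀ u ∈ Set.Icc 0 T, b < u → T - u < g u := by
    intro u hu hub
    by_contra h
    push_neg at h
    have : u ≤ b := by rw [hbdef]; exact le_csSup hSbbdd ⟨hu, h⟩
    linarith
  -- g a = a
  have hfaa : g a = a := by
    refine le_antisymm haSa.2 ?_
    by_contra h
    push_neg at h
    set u : ℝ := (a + g a) / 2 with hudef
    clear_value u
    have hga0 : 0 ≤ g a := by rw [hgeq a haIcc]; exact infDist_nonneg
    have huIcc : u ∈ Set.Icc 0 T := by
      constructor
      · simp only [hudef]; linarith [haIcc.1]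
      · simp only [hudef]; linarith [haIcc.2]
    have hguu : g u ≤ u := by
      have := hglip u huIcc a haIcc
      have habs : |u - a| = a - u := by
        rw [abs_of_nonpos (by simp only [hudef]; linarith)]; ring
      rw [habs] at this
      simp only [hudef] at *
      linarith
    have : a ≤ u := by rw [hadef]; exact csInf_le hSabdd ⟨huIcc, hguu⟩
    simp only [hudef] at this
    linarith
  have hfbb : g b = T - b := by
    refine le_antisymm hbSb.2 ?_
    by_contra h
    push_neg at h
    set u : ℝ := b + (T - b - g b) / 2 with hudef
    clear_value u
    have hgb0 : 0 ≤ g b := by rw [hgeq b hbIcc]; exact infDist_nonneg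
    have huIcc : u ∈ Set.Icc 0 T := by
      constructor
      · simp only [hudef]; linarith [hbIcc.1]
      · simp only [hudef]; linarith [hbIcc.2]
    have hguu : g u ≤ T - u := by
      have := hglip u huIcc b hbIcc
      have habs : |u - b| = u - b := by
        rw [abs_of_nonneg (by simp only [hudef]; linarith)]
      rw [habs] at this
      simp only [hudef] at *
      linarith
    have : u ≤ b := by rw [hbdef]; exact le_csSup hSbbdd ⟨huIcc, hguu⟩
    simp only [hudef] at this
    linarith
  have ha10 : 10 * K < a := by rw [hfaa] at hga; exact hga
  have hTb10 : 10 * K < T - b := by rw [hfbb] at hgb; exact hgb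
  -- case b < a
  by_cases hab : b < a
  · set u : ℝ := (a + b) / 2 with hudef
    clear_value u
    have huIcc : u ∈ Set.Icc 0 T := by
      constructor
      · simp only [hudef]; linarith [haIcc.1, hbIcc.1]
      · simp only [hudef]; linarith [haIcc.2, hbIcc.2]
    have hua : u < a := by simp only [hudef]; linarith
    have hub : b < u := by simp only [hudef]; linarith
    obtain ⟨pu, hpu⟩ := projSet_nonempty'_s12 hAcomp hAne (α u)
    have hgux : u < g u := hlt_a u huIcc hua
    have hguy : T - u < g u := hgt_b u huIcc hub
    have hKg : K < infDist (α u) A := by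
      rw [← hgeq u huIcc]; linarith [H u huIcc]
    have hc1 : dist pu p ≤ K := by
      refine core_lemma' hAcomp hK0 hcontr hpu hp hKg ?_
      have : dist (α u) x = u := by
        rw [← hx0, hdistα u huIcc 0 h0mem, sub_zero, abs_of_nonneg huIcc.1]
      rw [this, ← hgeq u huIcc]; exact hgux
    have hc2 : dist pu q ≤ K := by
      refine core_lemma' hAcomp hK0 hcontr hpu hq hKg ?_
      have : dist (α u) y = T - u := by
        rw [← hxT, hdistα u huIcc T hTmem]
        rw [abs_of_nonpos (by linarith [huIcc.2])]; ring
      rw [this, ← hgeq u huIcc]; exact hguy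
    have : dist p q ≤ 2 * K := by
      calc dist p q ≤ dist p pu + dist pu q := dist_triangle p pu q
        _ ≤ K + K := by rw [dist_comm p pu]; linarith
        _ = 2 * K := by ring
    linarith
  push_neg at hab  -- a ≤ b
  -- hP : near x side
  have hP : ∀ w ∈ Set.Icc 0 T, w < 2 * a → ∀ pw ∈ projSet A (α w), dist p pw ≤ 2 * K := by
    intro w hw hw2a pw hpw
    by_cases hwa : w < a
    · have hgw : w < g w := hlt_a w hw hwa
      have hKg : K < infDist (α w) A := by
        rw [← hgeq w hw]; linarith [H w hw]
      have hc : dist pw p ≤ K := by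
        refine core_lemma' hAcomp hK0 hcontr hpw hp hKg ?_
        have : dist (α w) x = w := by
          rw [← hx0, hdistα w hw 0 h0mem, sub_zero, abs_of_nonneg hw.1]
        rw [this, ← hgeq w hw]; exact hgw
      rw [dist_comm] at hc; linarith
    · push_neg at hwa
      set η : ℝ := 2 * a - w with hηdef
      clear_value η
      have hη0 : 0 < η := by simp only [hηdef]; linarith
      have hηa : η ≤ a := by simp only [hηdef]; linarith
      set u : ℝ := a - η / 4 with hudef
      clear_value u
      have huIcc : u ∈ Set.Icc 0 T := by
        constructor
        · simp only [hudef]; linarith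
        · simp only [hudef]; linarith [haIcc.2]
      have hua : u < a := by simp only [hudef]; linarith
      have hgu : u < g u := hlt_a u huIcc hua
      have hKg : K < infDist (α u) A := by
        rw [← hgeq u huIcc]; linarith [H u huIcc]
      obtain ⟨pu, hpu⟩ := projSet_nonempty'_s12 hAcomp hAne (α u)
      have hc1 : dist pu p ≤ K := by
        refine core_lemma' hAcomp hK0 hcontr hpu hp hKg ?_
        have : dist (α u) x = u := by
          rw [← hx0, hdistα u huIcc 0 h0mem, sub_zero, abs_of_nonneg huIcc.1]
        rw [this, ← hgeq u huIcc]; exact hgu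
      have hc2 : dist pu pw ≤ K := by
        refine core_lemma' hAcomp hK0 hcontr hpu hpw hKg ?_
        have hd : dist (α u) (α w) = w - u := by
          rw [hdistα u huIcc w hw]
          rw [abs_of_nonpos (by simp only [hudef]; linarith)]; ring
        rw [hd, ← hgeq u huIcc]
        have : w - u = a - 3 * η / 4 := by simp only [hudef, hηdef]; ring
        rw [this]
        have : a - 3 * η / 4 < u := by simp only [hudef]; linarith
        linarith
      calc dist p pw ≤ dist p pu + dist pu pw := dist_triangle p pu pw
        _ ≤ K + K := by rw [dist_comm p pu]; linarith
        _ = 2 * K := by ring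
  -- hQ : near y side
  set c : ℝ := 2 * b - T with hcdef
  clear_value c
  have hQ : ∀ w ∈ Set.Icc 0 T, c < w → w ≤ b → ∀ pw ∈ projSet A (α w), dist q pw ≤ 2 * K := by
    intro w hw hwc hwb pw hpw
    set η : ℝ := w - c with hηdef
    clear_value η
    have hη0 : 0 < η := by simp only [hηdef]; linarith
    have hηb : η ≤ T - b := by simp only [hηdef, hcdef]; linarith
    set u : ℝ := b + η / 4 with hudef
    clear_value u
    have huIcc : u ∈ Set.Icc 0 T := by
      constructor
      · simp only [hudef]; linarith [hbIcc.1]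
      · simp only [hudef]; linarith
    have hub : b < u := by simp only [hudef]; linarith
    have hgu : T - u < g u := hgt_b u huIcc hub
    have hKg : K < infDist (α u) A := by
      rw [← hgeq u huIcc]; linarith [H u huIcc]
    obtain ⟨pu, hpu⟩ := projSet_nonempty'_s12 hAcomp hAne (α u)
    have hc1 : dist pu q ≤ K := by
      refine core_lemma' hAcomp hK0 hcontr hpu hq hKg ?_
      have : dist (α u) y = T - u := by
        rw [← hxT, hdistα u huIcc T hTmem]
        rw [abs_of_nonpos (by linarith [huIcc.2])]; ring
      rw [this, ← hgeq u huIcc]; exact hgu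
    have hc2 : dist pu pw ≤ K := by
      refine core_lemma' hAcomp hK0 hcontr hpu hpw hKg ?_
      have hwu : w ≤ u := by
        simp only [hudef, hηdef, hcdef]; linarith
      have hd : dist (α u) (α w) = u - w := by
        rw [hdistα u huIcc w hw, abs_of_nonneg (by linarith)]
      rw [hd, ← hgeq u huIcc]
      have h1 : u - w = (T - b) - 3 * η / 4 := by
        simp only [hudef, hηdef, hcdef]; ring
      have h2 : T - u = (T - b) - η / 4 := by simp only [hudef]; ring
      linarith
    calc dist q pw ≤ dist q pu + dist pu pw := dist_triangle q pu pw
      _ ≤ K + K := by rw [dist_comm q pu]; linarith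
      _ = 2 * K := by ring
  have hcb : c ≤ b := by simp only [hcdef]; linarith [hbIcc.2]
  have hbc10 : 10 * K < b - c := by simp only [hcdef]; linarith
  -- triangle bound and end estimates
  have hf0 : infDist x A ≤ 2 * a := by
    have h1 := hlip 0 h0mem a haIcc
    rw [hx0] at h1
    have h2 : infDist (α a) A = a := by rw [← hgeq a haIcc]; exact hfaa
    have h3 : |0 - a| = a := by rw [abs_of_nonpos (by linarith [haIcc.1])]; ring
    rw [h2, h3] at h1; linarith
  have hfT : infDist y A ≤ 2 * (T - b) := by
    have h1 := hlip T hTmem b hbIcc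
    rw [hxT] at h1
    have h2 : infDist (α b) A = T - b := by rw [← hgeq b hbIcc]; exact hfbb
    have h3 : |T - b| = T - b := abs_of_nonneg (by linarith [hbIcc.2])
    rw [h2, h3] at h1; linarith
  have htri : T ≤ infDist x A + dist p q + infDist y A := by
    have h1 : T ≤ dist x p + dist p q + dist q y := by
      rw [hTdef]; exact dist_triangle4 x p q y
    rw [hp.2] at h1
    have h2 : dist q y = infDist y A := by rw [dist_comm]; exact hq.2
    rw [h2] at h1; exact h1
  have hM : c - 2 * a ≤ dist p q := by
    simp only [hcdef]; linarith
  -- case c < 2a : direct contradiction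
  by_cases hc2a : c < 2 * a
  · set d : ℝ := min K ((2 * a - c) / 2) with hddef
    have hd0 : 0 < d := by
      simp only [hddef]
      exact lt_min hK (by linarith)
    set w : ℝ := min (2 * a - d) b with hwdef
    have hw2a : w < 2 * a := by
      calc w ≤ 2 * a - d := min_le_left _ _
        _ < 2 * a := by linarith
    have hwc : c < w := by
      have h1 : c < 2 * a - d := by
        have : d ≤ (2 * a - c) / 2 := min_le_right _ _
        linarith
      have h2 : c < b := by linarith
      exact lt_min h1 h2
    have hwb : w ≤ b := min_le_right _ _
    have hwIcc : w ∈ Set.Icc 0 T := by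
      constructor
      · have h1 : 2 * a - d ≥ a := by
          have : d ≤ K := min_le_left _ _
          linarith
        have := le_min (by linarith [haIcc.1, ha10] : (0:ℝ) ≤ 2 * a - d)
          (by linarith [hbIcc.1] : (0:ℝ) ≤ b)
        exact this
      · exact le_trans hwb hbIcc.2
    obtain ⟨pw, hpw⟩ := projSet_nonempty'_s12 hAcomp hAne (α w)
    have h1 := hP w hwIcc hw2a pw hpw
    have h2 := hQ w hwIcc hwc hwb pw hpw
    have : dist p q ≤ 4 * K := by
      calc dist p q ≤ dist p pw + dist pw q := dist_triangle p pw q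
        _ ≤ 2 * K + 2 * K := by rw [dist_comm p pw] at *; rw [dist_comm pw q]; linarith
        _ = 4 * K := by ring
    linarith
  push_neg at hc2a  -- 2a ≤ c
  set w₀ : ℝ := 2 * a - K with hw0def
  clear_value w₀
  have hw0a : a ≤ w₀ := by simp only [hw0def]; linarith
  have hw0c : w₀ ≤ c := by simp only [hw0def]; linarith
  have hw0Icc : w₀ ∈ Set.Icc 0 T := by
    constructor
    · linarith [haIcc.1, ha10]
    · linarith [hbIcc.2, hcb]
  have hcIcc : c ∈ Set.Icc 0 T := by
    constructor
    · linarith [haIcc.1, ha10]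
    · linarith [hbIcc.2]
  -- the chain
  have chain : ∀ i : ℕ, ∀ w, w₀ ≤ w → w ≤ c → w ≤ w₀ + 9 * K * i →
      ∀ pw ∈ projSet A (α w), dist p pw ≤ 2 * K + K * i := by
    intro i
    induction i with
    | zero =>
      intro w h1 h2 h3 pw hpw
      simp only [Nat.cast_zero, mul_zero, add_zero] at h3 ⊢
      have hww : w = w₀ := le_antisymm h3 h1
      refine hP w₀ hw0Icc (by rw [hw0def]; linarith) pw ?_
      rw [← hww]; exact hpw
    | succ i ih =>
      intro w h1 h2 h3 pw hpw
      by_cases hle : w ≤ w₀ + 9 * K * i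
      · have := ih w h1 h2 hle pw hpw
        have hKi : K * (i:ℝ) ≤ K * ((i:ℝ) + 1) :=
          mul_le_mul_of_nonneg_left (by linarith) hK0
        push_cast
        push_cast at this
        linarith
      · push_neg at hle
        set w'' : ℝ := max w₀ (w - 9 * K) with hw''def
        have hw''w : w'' ≤ w := max_le h1 (by linarith)
        have hw''c : w'' ≤ c := le_trans hw''w h2
        have hw''0 : w₀ ≤ w'' := le_max_left _ _
        have hw''i : w'' ≤ w₀ + 9 * K * i := by
          apply max_le
          · have hi0 : (0:ℝ) ≤ (i:ℝ) := Nat.cast_nonneg i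
            have : (0:ℝ) ≤ 9 * K * (i:ℝ) := by
              have := mul_nonneg (by linarith : (0:ℝ) ≤ 9 * K) hi0
              linarith [this]
            linarith
          · push_cast at h3; linarith
        have hw''Icc : w'' ∈ Set.Icc 0 T := by
          constructor
          · linarith [hw0Icc.1]
          · linarith [hcIcc.2]
        have hwIcc : w ∈ Set.Icc 0 T := by
          constructor
          · linarith [hw0Icc.1]
          · linarith [hcIcc.2]
        obtain ⟨pu, hpu⟩ := projSet_nonempty'_s12 hAcomp hAne (α w'')
        have ih2 := ih w'' hw''0 hw''c hw''i pu hpu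
        have hKg : K < infDist (α w'') A := by
          rw [← hgeq w'' hw''Icc]; linarith [H w'' hw''Icc]
        have hco : dist pu pw ≤ K := by
          refine core_lemma' hAcomp hK0 hcontr hpu hpw hKg ?_
          have hd : dist (α w'') (α w) = w - w'' := by
            rw [hdistα w'' hw''Icc w hwIcc, abs_of_nonpos (by linarith)]; ring
          rw [hd, ← hgeq w'' hw''Icc]
          have hstep : w - w'' ≤ 9 * K := by
            have : w - 9 * K ≤ w'' := le_max_right _ _
            linarith
          linarith [H w'' hw''Icc]
        push_cast
        push_cast at ih2
        calc dist p pw ≤ dist p pu + dist pu pw := dist_triangle p pu pw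
          _ ≤ (2 * K + K * i) + K := by linarith
          _ = 2 * K + K * ((i:ℝ) + 1) := by ring
  -- apply chain at c
  set n : ℕ := ⌈(c - w₀) / (9 * K)⌉₊ with hndef
  have h9K : (0:ℝ) < 9 * K := by linarith
  have hcn : c ≤ w₀ + 9 * K * n := by
    have h1 : (c - w₀) / (9 * K) ≤ (n:ℝ) := Nat.le_ceil _
    rw [div_le_iff₀ h9K] at h1
    rw [mul_comm] at h1
    linarith
  obtain ⟨pc, hpc⟩ := projSet_nonempty'_s12 hAcomp hAne (α c)
  have h5 : dist p pc ≤ 2 * K + K * n := chain n c hw0c (le_refl c) hcn pc hpc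
  have hn1 : (n:ℝ) ≤ (c - w₀) / (9 * K) + 1 := by
    have h0 : (0:ℝ) ≤ (c - w₀) / (9 * K) := by
      apply div_nonneg (by linarith) (by linarith)
    exact le_of_lt (Nat.ceil_lt_add_one h0)
  -- hop to w' = c + K
  set w' : ℝ := c + K with hw'def
  clear_value w'
  have hw'b : w' ≤ b := by simp only [hw'def]; linarith
  have hw'Icc : w' ∈ Set.Icc 0 T := by
    constructor
    · linarith [hcIcc.1]
    · linarith [hbIcc.2]
  obtain ⟨pw', hpw'⟩ := projSet_nonempty'_s12 hAcomp hAne (α w')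
  have hKgc : K < infDist (α c) A := by
    rw [← hgeq c hcIcc]; linarith [H c hcIcc]
  have h6 : dist pc pw' ≤ K := by
    refine core_lemma' hAcomp hK0 hcontr hpc hpw' hKgc ?_
    have hd : dist (α c) (α w') = K := by
      rw [hdistα c hcIcc w' hw'Icc]
      simp only [hw'def]
      rw [abs_of_nonpos (by linarith)]; ring
    rw [hd, ← hgeq c hcIcc]
    linarith [H c hcIcc]
  have h7 : dist q pw' ≤ 2 * K := hQ w' hw'Icc (by simp only [hw'def]; linarith) hw'b pw' hpw'
  -- final contradiction
  have hfin : dist p q ≤ dist p pc + dist pc pw' + dist pw' q := dist_triangle4 p pc pw' q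
  have h8 : dist pw' q ≤ 2 * K := by rw [dist_comm]; exact h7
  have hKn : K * (n:ℝ) ≤ (c - w₀) / 9 + K := by
    have h1 : K * (n:ℝ) ≤ K * ((c - w₀) / (9 * K) + 1) :=
      mul_le_mul_of_nonneg_left hn1 hK0
    have h2 : K * ((c - w₀) / (9 * K) + 1) = (c - w₀) / 9 + K := by
      field_simp
    linarith
  have hcw0 : c - w₀ ≤ dist p q + K := by
    have : c - 2 * a ≤ dist p q := hM
    simp only [hw0def]; linarith
  linarith
end
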